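/- Let ℓ ≥ 2 be an integer, let V be a finite nonempty set with |V| ≤ ℓ − 1, let r ∈ V, let k be a nonnegative integer, and let α, β : V → ℝ≥0 satisfy: α_r ≤ β_r; β_v ≥ ⌈α_v⌉ − 1/ℓ for every v ∈ V ∖ {r}; and Σ_{v∈V} β_v ≤ k. Then Σ_{v∈V} ⌈α_v⌉ ≤ k + 1. -/

import Mathlib

/-- **Facility-counting inequality at the end of Section 4.4 (case `|C*| < ℓ`).**
If `|V| ≤ ℓ − 1`, `a r ≤ b r`, `b v ≥ ⌈a v⌉ − 1/ℓ` for every non-root `v`, and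
`Σ_v b v ≤ k`, then `Σ_v ⌈a v⌉ ≤ k + 1`. -/
theorem stmt18 (α : Type) (ℓ : ℕ) (hℓ : 2 ≤ ℓ)
    (V : Finset α) (hVne : V.Nonempty) (hV : V.card ≤ ℓ - 1)
    (r : α) (hr : r ∈ V) (k : ℕ)
    (a b : α → ℝ)
    (ha0 : ∀ v ∈ V, 0 ≤ a v) (hb0 : ∀ v ∈ V, 0 ≤ b v)
    (har : a r ≤ b r)
    (hab : ∀ v ∈ V, v ≠ r → (⌈a v⌉ : ℝ) - 1 / (ℓ : ℝ) ≤ b v)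
    (hsum : ∑ v ∈ V, b v ≤ (k : ℝ)) :
    ∑ v ∈ V, ⌈a v⌉ ≤ (k : ℤ) + 1 := by
  classical
  have hℓR : (2:ℝ) ≤ (ℓ:ℝ) := by exact_mod_cast hℓ
  have hℓpos : (0:ℝ) < (ℓ:ℝ) := by linarith
  have hcard : ((V.erase r).card : ℝ) ≤ (ℓ:ℝ) - 2 := by
    have h1 : (V.erase r).card + 1 = V.card := Finset.card_erase_add_one hr
    have h2 : (V.erase r).card + 2 ≤ ℓ := by omega
    have := Nat.cast_le (α := ℝ) |>.mpr h2
    push_cast at this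
    linarith
  have key : ((∑ v ∈ V, ⌈a v⌉ : ℤ) : ℝ) < (k:ℝ) + 2 := by
    push_cast
    rw [← Finset.add_sum_erase V _ hr]
    have h1 : (⌈a r⌉ : ℝ) < b r + 1 :=
      lt_of_lt_of_le (Int.ceil_lt_add_one _) (by linarith)
    have h2 : ∑ v ∈ V.erase r, (⌈a v⌉:ℝ) ≤ ∑ v ∈ V.erase r, (b v + 1/(ℓ:ℝ)) :=
      Finset.sum_le_sum (fun v hv => by
        have := hab v (Finset.mem_of_mem_erase hv) (Finset.ne_of_mem_erase hv)
        linarith)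
    rw [Finset.sum_add_distrib, Finset.sum_const, nsmul_eq_mul] at h2
    have hsb : b r + ∑ v ∈ V.erase r, b v = ∑ v ∈ V, b v :=
      Finset.add_sum_erase V _ hr
    have h3 : ((V.erase r).card : ℝ) * (1/(ℓ:ℝ)) < 1 := by
      rw [mul_one_div, div_lt_one hℓpos]
      linarith
    linarith
  have key2 : (∑ v ∈ V, ⌈a v⌉ : ℤ) < (k:ℤ) + 2 := by exact_mod_cast key
  omega
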